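/- Let V be an oriented 4-dimensional real inner product space, J a self-dual orthogonal complex structure with 2-form α(x,y) = ⟨Jx, y⟩, and L an anti-self-dual orthogonal complex structure with 2-form β(x,y) = ⟨Lx, y⟩. Then the form ½(α + β) is calibrating, i.e. sup{½(α(u,v) + β(u,v)) : u, v ∈ V orthonormal} = 1, and it calibrates a unique two-plane: there is exactly one 2-dimensional subspace P of V admitting an orthonormal basis (u,v) with ½(α(u,v) + β(u,v)) = 1. -/

import Mathlib

open scoped RealInnerProductSpace
open Module

section Aux

variable {V : Type*} [NormedAddCommGroup V] [InnerProductSpace ℝ V]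

/-- Build an orthonormal basis from an orthonormal 4-family in a 4-dimensional space. -/
noncomputable def onb4 (hdim : Module.finrank ℝ V = 4) {v : Fin 4 → V}
    (hv : Orthonormal ℝ v) : OrthonormalBasis (Fin 4) ℝ V :=
  haveI : FiniteDimensional ℝ V := .of_finrank_pos (by omega)
  OrthonormalBasis.mk hv
    (hv.linearIndependent.span_eq_top_of_card_eq_finrank (by simp [hdim])).ge

@[simp] lemma onb4_apply (hdim : Module.finrank ℝ V = 4) {v : Fin 4 → V}
    (hv : Orthonormal ℝ v) (i : Fin 4) : onb4 hdim hv i = v i := by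
  simp [onb4, OrthonormalBasis.coe_mk]

lemma swap_orientation (e g : OrthonormalBasis (Fin 4) ℝ V)
    (hg : ∀ i, g i = ![e 1, e 0, e 2, e 3] i) :
    g.toBasis.orientation = - e.toBasis.orientation := by
  have hinner : ∀ i j : Fin 4, ⟪e i, e j⟫ = if i = j then 1 else 0 :=
    orthonormal_iff_ite.mp e.orthonormal
  have hdet : e.toBasis.det ⇑g.toBasis = -1 := by
    rw [Basis.det_apply]
    have hm : ∀ i j, e.toBasis.toMatrix ⇑g.toBasis i j = ⟪e i, g j⟫ := by
      intro i j
      rw [Basis.toMatrix_apply, OrthonormalBasis.coe_toBasis,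
        e.coe_toBasis_repr_apply, e.repr_apply_apply]
    have hM : e.toBasis.toMatrix ⇑g.toBasis = !![0,1,0,0;1,0,0,0;0,0,1,0;0,0,0,1] := by
      ext i j
      rw [hm i j, hg j]
      fin_cases i <;> fin_cases j <;>
        simp [hinner, Matrix.vecHead, Matrix.vecTail]
    rw [hM]
    simp [Matrix.det_succ_row_zero, Fin.sum_univ_succ]; rfl
  rw [← (Basis.orientation_ne_iff_eq_neg _ _)]
  intro h
  have := (Basis.orientation_eq_iff_det_pos e.toBasis g.toBasis).mp h.symm
  rw [hdet] at this
  linarith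

lemma orthonormal_quad (J : V →ₗ[ℝ] V)
    (hJ2 : ∀ x : V, J (J x) = -x) (hJo : ∀ x y : V, ⟪J x, J y⟫ = ⟪x, y⟫)
    (u w : V) (hu : ‖u‖ = 1) (hw : ‖w‖ = 1)
    (huw : ⟪u, w⟫ = 0) (hJuw : ⟪J u, w⟫ = 0) :
    Orthonormal ℝ ![u, J u, w, J w] := by
  have hJsk : ∀ x y : V, ⟪J x, y⟫ = -⟪x, J y⟫ := by
    intro x y
    have h1 : ⟪J x, J (J y)⟫ = ⟪x, J y⟫ := hJo x (J y)
    rw [hJ2 y, inner_neg_right] at h1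
    linarith
  have huu : ⟪u, u⟫ = 1 := by
    rw [real_inner_self_eq_norm_mul_norm, hu]; norm_num
  have hww : ⟪w, w⟫ = 1 := by
    rw [real_inner_self_eq_norm_mul_norm, hw]; norm_num
  have hJuJu : ⟪J u, J u⟫ = 1 := by rw [hJo, huu]
  have hJwJw : ⟪J w, J w⟫ = 1 := by rw [hJo, hww]
  have huJu : ⟪u, J u⟫ = 0 := by
    have h := hJsk u u
    have hc : ⟪J u, u⟫ = ⟪u, J u⟫ := real_inner_comm _ _
    linarith
  have hJuu : ⟪J u, u⟫ = 0 := by rw [real_inner_comm, huJu]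
  have hwJw : ⟪w, J w⟫ = 0 := by
    have h := hJsk w w
    have hc : ⟪J w, w⟫ = ⟪w, J w⟫ := real_inner_comm _ _
    linarith
  have hJww : ⟪J w, w⟫ = 0 := by rw [real_inner_comm, hwJw]
  have hwu : ⟪w, u⟫ = 0 := by rw [real_inner_comm, huw]
  have hwJu : ⟪w, J u⟫ = 0 := by rw [real_inner_comm, hJuw]
  have huJw : ⟪u, J w⟫ = 0 := by
    have := hJsk u w
    linarith
  have hJwu : ⟪J w, u⟫ = 0 := by rw [real_inner_comm, huJw]
  have hJuJw : ⟪J u, J w⟫ = 0 := by rw [hJo, huw]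
  have hJwJu : ⟪J w, J u⟫ = 0 := by rw [real_inner_comm, hJuJw]
  rw [orthonormal_iff_ite]
  intro i j
  fin_cases i <;> fin_cases j <;>
    simp [huu, hww, hJuJu, hJwJw, huJu, hJuu, hwJw, hJww, hwu, hwJu, huJw, hJwu,
      hJuJw, hJwJu, huw, hJuw, -inner_self_eq_norm_sq_to_K, -real_inner_self_eq_norm_sq]

/-- There exists a `J`-adapted positively-oriented orthonormal basis. -/
lemma exists_adapted (hdim : Module.finrank ℝ V = 4)
    (o : Orientation ℝ V (Fin 4)) (J : V →ₗ[ℝ] V)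
    (hJ2 : ∀ x : V, J (J x) = -x) (hJo : ∀ x y : V, ⟪J x, J y⟫ = ⟪x, y⟫)
    (hJsd : ∀ e : OrthonormalBasis (Fin 4) ℝ V, e.toBasis.orientation = o →
      ⟪J (e 0), e 1⟫ * ⟪J (e 2), e 3⟫ - ⟪J (e 0), e 2⟫ * ⟪J (e 1), e 3⟫ +
        ⟪J (e 0), e 3⟫ * ⟪J (e 1), e 2⟫ = 1) :
    ∃ e : OrthonormalBasis (Fin 4) ℝ V, e.toBasis.orientation = o ∧
      e 1 = J (e 0) ∧ e 3 = J (e 2) := by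
  classical
  haveI : FiniteDimensional ℝ V := .of_finrank_pos (by omega)
  have hJsk : ∀ x y : V, ⟪J x, y⟫ = -⟪x, J y⟫ := by
    intro x y
    have h1 : ⟪J x, J (J y)⟫ = ⟪x, J y⟫ := hJo x (J y)
    rw [hJ2 y, inner_neg_right] at h1
    linarith
  haveI : Nontrivial V := nontrivial_of_finrank_pos (R := ℝ) (by omega)
  obtain ⟨u0, hu0⟩ := exists_ne (0 : V)
  set u : V := ‖u0‖⁻¹ • u0 with hu_def
  have hu : ‖u‖ = 1 := norm_smul_inv_norm hu0
  -- find a unit vector w orthogonal to u and J u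
  set K : Submodule ℝ V := Submodule.span ℝ (Set.range ![u, J u]) with hK_def
  have hKle : Module.finrank ℝ K ≤ 2 := by
    have h1 := finrank_range_le_card (R := ℝ) ![u, J u]
    simpa [Set.finrank, hK_def] using h1
  have hKorth : Module.finrank ℝ (Kᗮ) ≠ 0 := by
    have hsum := Submodule.finrank_add_finrank_orthogonal (K := K)
    omega
  obtain ⟨w0, hw0K, hw0⟩ := Submodule.exists_mem_ne_zero_of_ne_bot (p := Kᗮ) (by
    intro h
    rw [h] at hKorth
    simp at hKorth)
  set w : V := ‖w0‖⁻¹ • w0 with hw_def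
  have hw : ‖w‖ = 1 := norm_smul_inv_norm hw0
  have hwK : w ∈ Kᗮ := Submodule.smul_mem _ _ hw0K
  have huw : ⟪u, w⟫ = 0 :=
    (Submodule.mem_orthogonal K w).mp hwK u (Submodule.subset_span ⟨0, rfl⟩)
  have hJuw : ⟪J u, w⟫ = 0 :=
    (Submodule.mem_orthogonal K w).mp hwK (J u) (Submodule.subset_span ⟨1, rfl⟩)
  have huu : ⟪u, u⟫ = 1 := by
    rw [real_inner_self_eq_norm_mul_norm, hu]; norm_num
  have hww : ⟪w, w⟫ = 1 := by
    rw [real_inner_self_eq_norm_mul_norm, hw]; norm_num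
  have huJw : ⟪u, J w⟫ = 0 := by
    have := hJsk u w
    linarith
  have hv : Orthonormal ℝ ![u, J u, w, J w] := orthonormal_quad J hJ2 hJo u w hu hw huw hJuw
  set e : OrthonormalBasis (Fin 4) ℝ V := onb4 hdim hv with he_def
  have he0 : e 0 = u := by rw [he_def]; simp
  have he1 : e 1 = J u := by rw [he_def]; simp
  have he2 : e 2 = w := by rw [he_def]; simp
  have he3 : e 3 = J w := by rw [he_def]; simp
  rcases Basis.orientation_eq_or_eq_neg e.toBasis o with ho | ho
  · exact ⟨e, ho.symm, by rw [he1, he0], by rw [he3, he2]⟩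
  · -- contradiction: the swapped basis is positively oriented but has Pfaffian -1
    exfalso
    have hv' : Orthonormal ℝ ![J u, u, w, J w] := by
      have hcomp : ![J u, u, w, J w] = ![u, J u, w, J w] ∘ (Equiv.swap 0 1) := by
        funext i
        fin_cases i <;> simp [Equiv.swap_apply_of_ne_of_ne]
      rw [hcomp]
      exact hv.comp _ (Equiv.swap 0 1).injective
    set g : OrthonormalBasis (Fin 4) ℝ V := onb4 hdim hv' with hg_def
    have hgor : g.toBasis.orientation = - e.toBasis.orientation := by
      apply swap_orientation e g
      intro i
      rw [hg_def]
      fin_cases i <;> simp [he0, he1, he2, he3]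
    have hgo : g.toBasis.orientation = o := by rw [hgor, ho]
    have hP := hJsd g hgo
    have hg0 : g 0 = J u := by rw [hg_def]; simp
    have hg1 : g 1 = u := by rw [hg_def]; simp
    have hg2 : g 2 = w := by rw [hg_def]; simp
    have hg3 : g 3 = J w := by rw [hg_def]; simp
    rw [hg0, hg1, hg2, hg3, hJ2 u] at hP
    have h1 : ⟪-u, u⟫ = -1 := by rw [inner_neg_left, huu]
    have h2 : ⟪J w, J w⟫ = 1 := by rw [hJo, hww]
    have h3 : ⟪-u, w⟫ = 0 := by rw [inner_neg_left, huw]; ring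
    have h4 : ⟪-u, J w⟫ = 0 := by rw [inner_neg_left, huJw]; ring
    have h5 : ⟪J u, J w⟫ = 0 := by rw [hJo, huw]
    rw [h1, h2, h3, h4, h5, hJuw] at hP
    norm_num at hP

end Aux

set_option maxHeartbeats 2000000 in
lemma exists_unit_fixed {V : Type*} [NormedAddCommGroup V] [InnerProductSpace ℝ V]
    (o : Orientation ℝ V (Fin 4)) (J L : V →ₗ[ℝ] V)
    (hJ2 : ∀ x : V, J (J x) = -x)
    (hL2 : ∀ x : V, L (L x) = -x) (hLo : ∀ x y : V, ⟪L x, L y⟫ = ⟪x, y⟫)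
    (e : OrthonormalBasis (Fin 4) ℝ V)
    (ho : e.toBasis.orientation = o)
    (he1 : e 1 = J (e 0)) (he3 : e 3 = J (e 2))
    (hLasd : ∀ e : OrthonormalBasis (Fin 4) ℝ V, e.toBasis.orientation = o →
      ⟪L (e 0), e 1⟫ * ⟪L (e 2), e 3⟫ - ⟪L (e 0), e 2⟫ * ⟪L (e 1), e 3⟫ +
        ⟪L (e 0), e 3⟫ * ⟪L (e 1), e 2⟫ = -1) :
    ∃ u : V, ‖u‖ = 1 ∧ J u = L u := by
  have hinner : ∀ i j : Fin 4, ⟪e i, e j⟫ = if i = j then 1 else 0 :=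
    orthonormal_iff_ite.mp e.orthonormal
  have hLsk : ∀ x y : V, ⟪L x, y⟫ = -⟪x, L y⟫ := by
    intro x y
    have h1 : ⟪L x, L (L y)⟫ = ⟪x, L y⟫ := hLo x (L y)
    rw [hL2 y, inner_neg_right] at h1
    linarith
  have hLself : ∀ x : V, ⟪L x, x⟫ = 0 := by
    intro x
    have h := hLsk x x
    have hc : ⟪L x, x⟫ = ⟪x, L x⟫ := real_inner_comm _ _
    linarith
  have hLself' : ∀ x : V, ⟪x, L x⟫ = 0 := by
    intro x; rw [real_inner_comm]; exact hLself x
  -- skew-symmetry table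
  have t10 : ⟪L (e 1), e 0⟫ = -⟪L (e 0), e 1⟫ := by
    rw [hLsk, real_inner_comm]
  have t20 : ⟪L (e 2), e 0⟫ = -⟪L (e 0), e 2⟫ := by
    rw [hLsk, real_inner_comm]
  have t30 : ⟪L (e 3), e 0⟫ = -⟪L (e 0), e 3⟫ := by
    rw [hLsk, real_inner_comm]
  have t21 : ⟪L (e 2), e 1⟫ = -⟪L (e 1), e 2⟫ := by
    rw [hLsk, real_inner_comm]
  have t31 : ⟪L (e 3), e 1⟫ = -⟪L (e 1), e 3⟫ := by
    rw [hLsk, real_inner_comm]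
  have t32 : ⟪L (e 3), e 2⟫ = -⟪L (e 2), e 3⟫ := by
    rw [hLsk, real_inner_comm]
  -- reversed table
  have n01 : ⟪e 0, L (e 1)⟫ = -⟪L (e 0), e 1⟫ := by rw [real_inner_comm, t10]
  have n21 : ⟪e 2, L (e 1)⟫ = ⟪L (e 1), e 2⟫ := real_inner_comm _ _
  have n31 : ⟪e 3, L (e 1)⟫ = ⟪L (e 1), e 3⟫ := real_inner_comm _ _
  have n02 : ⟪e 0, L (e 2)⟫ = -⟪L (e 0), e 2⟫ := by rw [real_inner_comm, t20]
  have n12 : ⟪e 1, L (e 2)⟫ = -⟪L (e 1), e 2⟫ := by rw [real_inner_comm, t21]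
  have n32 : ⟪e 3, L (e 2)⟫ = ⟪L (e 2), e 3⟫ := real_inner_comm _ _
  have n03 : ⟪e 0, L (e 3)⟫ = -⟪L (e 0), e 3⟫ := by rw [real_inner_comm, t30]
  have n13 : ⟪e 1, L (e 3)⟫ = -⟪L (e 1), e 3⟫ := by rw [real_inner_comm, t31]
  have n23 : ⟪e 2, L (e 3)⟫ = -⟪L (e 2), e 3⟫ := by rw [real_inner_comm, t32]
  -- Parseval relations
  have he00 : ⟪e 0, e 0⟫ = 1 := by simpa using hinner 0 0
  have he12 : ⟪e 1, e 2⟫ = 0 := by simpa using hinner 1 2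
  have he13 : ⟪e 1, e 3⟫ = 0 := by simpa using hinner 1 3
  have he23 : ⟪e 2, e 3⟫ = 0 := by simpa using hinner 2 3
  have he21 : ⟪e 2, e 1⟫ = 0 := by simpa using hinner 2 1
  have he31 : ⟪e 3, e 1⟫ = 0 := by simpa using hinner 3 1
  have he32 : ⟪e 3, e 2⟫ = 0 := by simpa using hinner 3 2
  have he11 : ⟪e 1, e 1⟫ = 1 := by simpa using hinner 1 1
  have he22 : ⟪e 2, e 2⟫ = 1 := by simpa using hinner 2 2
  have he33 : ⟪e 3, e 3⟫ = 1 := by simpa using hinner 3 3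
  have n00 : ⟪e 0, L (e 0)⟫ = 0 := hLself' _
  have n11 : ⟪e 1, L (e 1)⟫ = 0 := hLself' _
  have n22 : ⟪e 2, L (e 2)⟫ = 0 := hLself' _
  have n33 : ⟪e 3, L (e 3)⟫ = 0 := hLself' _
  have n10 : ⟪e 1, L (e 0)⟫ = ⟪L (e 0), e 1⟫ := real_inner_comm _ _
  have n20 : ⟪e 2, L (e 0)⟫ = ⟪L (e 0), e 2⟫ := real_inner_comm _ _
  have n30 : ⟪e 3, L (e 0)⟫ = ⟪L (e 0), e 3⟫ := real_inner_comm _ _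
  have r0 := e.sum_inner_mul_inner (L (e 0)) (L (e 0))
  have r1 := e.sum_inner_mul_inner (L (e 1)) (L (e 1))
  have r2 := e.sum_inner_mul_inner (L (e 2)) (L (e 2))
  have r3 := e.sum_inner_mul_inner (L (e 3)) (L (e 3))
  rw [hLo, Fin.sum_univ_four, he00,
    real_inner_comm (L (e 0)) (e 0), real_inner_comm (L (e 0)) (e 1),
    real_inner_comm (L (e 0)) (e 2), real_inner_comm (L (e 0)) (e 3),
    hLself (e 0)] at r0
  rw [hLo, Fin.sum_univ_four, he11,
    real_inner_comm (L (e 1)) (e 0), real_inner_comm (L (e 1)) (e 1),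
    real_inner_comm (L (e 1)) (e 2), real_inner_comm (L (e 1)) (e 3),
    hLself (e 1), t10] at r1
  rw [hLo, Fin.sum_univ_four, he22,
    real_inner_comm (L (e 2)) (e 0), real_inner_comm (L (e 2)) (e 1),
    real_inner_comm (L (e 2)) (e 2), real_inner_comm (L (e 2)) (e 3),
    hLself (e 2), t20, t21] at r2
  rw [hLo, Fin.sum_univ_four, he33,
    real_inner_comm (L (e 3)) (e 0), real_inner_comm (L (e 3)) (e 1),
    real_inner_comm (L (e 3)) (e 2), real_inner_comm (L (e 3)) (e 3),
    hLself (e 3), t30, t31, t32] at r3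
  have Pf := hLasd e ho
  -- introduce scalar names
  set a := ⟪L (e 0), e 1⟫ with ha_def
  set b := ⟪L (e 0), e 2⟫ with hb_def
  set c := ⟪L (e 0), e 3⟫ with hc_def
  set d := ⟪L (e 1), e 2⟫ with hd_def
  set p := ⟪L (e 1), e 3⟫ with hp_def
  set q := ⟪L (e 2), e 3⟫ with hq_def
  clear_value a b c d p q
  -- the ASD relations
  have hsum : (a + q)^2 + (b - p)^2 + (c + d)^2 = 0 := by
    linear_combination (1/2) * r0 + (1/2) * r1 + (1/2) * r2 + (1/2) * r3 + 2 * Pf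
  have hq : q = -a := by
    have h1 : (a + q)^2 = 0 := by
      have := sq_nonneg (b - p); have := sq_nonneg (c + d); have := sq_nonneg (a + q)
      linarith
    have h2 : a + q = 0 := (pow_eq_zero_iff (by norm_num : (2:ℕ) ≠ 0)).mp h1
    linarith
  have hp : p = b := by
    have h1 : (b - p)^2 = 0 := by
      have := sq_nonneg (a + q); have := sq_nonneg (c + d); have := sq_nonneg (b - p)
      linarith
    have h2 : b - p = 0 := (pow_eq_zero_iff (by norm_num : (2:ℕ) ≠ 0)).mp h1
    linarith
  have hd : d = -c := by
    have h1 : (c + d)^2 = 0 := by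
      have := sq_nonneg (a + q); have := sq_nonneg (b - p); have := sq_nonneg (c + d)
      linarith
    have h2 : c + d = 0 := (pow_eq_zero_iff (by norm_num : (2:ℕ) ≠ 0)).mp h1
    linarith
  -- expansions of L on basis vectors
  have hLe1 : L (e 1) = (-a) • e 0 + (-c) • e 2 + b • e 3 := by
    have h := e.sum_repr' (L (e 1))
    rw [Fin.sum_univ_four, n01, hLself' (e 1), n21, n31, hd, hp] at h
    rw [← h]; module
  have hLe2 : L (e 2) = (-b) • e 0 + c • e 1 + (-a) • e 3 := by
    have h := e.sum_repr' (L (e 2))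
    rw [Fin.sum_univ_four, n02, n12, hLself' (e 2), n32, hd, hq] at h
    rw [← h]; module
  have hLe3 : L (e 3) = (-c) • e 0 + (-b) • e 1 + a • e 2 := by
    have h := e.sum_repr' (L (e 3))
    rw [Fin.sum_univ_four, n03, n13, n23, hLself' (e 3), hp, hq] at h
    rw [← h]; module
  have hJe1 : J (e 1) = -(e 0) := by rw [he1, hJ2]
  have hJe2 : J (e 2) = e 3 := he3.symm
  have hJe3 : J (e 3) = -(e 2) := by rw [he3, hJ2]
  -- case split on a = -1
  by_cases ha1 : a = -1
  · -- then b = c = 0 and e 2 works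
    have hb0 : b = 0 := by
      have h1 : b ^ 2 = 0 := by
        have h2 : a * a = 1 := by rw [ha1]; norm_num
        linarith only [r0, h2, sq_nonneg c, sq_nonneg b]
      exact (pow_eq_zero_iff (by norm_num : (2:ℕ) ≠ 0)).mp h1
    have hc0 : c = 0 := by
      have h1 : c ^ 2 = 0 := by
        have h2 : a * a = 1 := by rw [ha1]; norm_num
        linarith only [r0, h2, sq_nonneg c, sq_nonneg b]
      exact (pow_eq_zero_iff (by norm_num : (2:ℕ) ≠ 0)).mp h1
    refine ⟨e 2, e.orthonormal.1 2, ?_⟩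
    rw [hJe2, hLe2, hb0, hc0, ha1]
    module
  · -- otherwise (1+a) • e 1 + b • e 2 + c • e 3 works
    set x : V := (1 + a) • e 1 + b • e 2 + c • e 3 with hx_def
    clear_value x
    have hJL : J x = L x := by
      have hJx : J x = (-(1 + a)) • e 0 + (-c) • e 2 + b • e 3 := by
        rw [hx_def, map_add, map_add, map_smul, map_smul, map_smul,
          hJe1, hJe2, hJe3]
        module
      have hLx : L x = (-(1 + a)) • e 0 + (-c) • e 2 + b • e 3 := by
        rw [hx_def, map_add, map_add, map_smul, map_smul, map_smul,
          hLe1, hLe2, hLe3]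
        match_scalars
        · linear_combination (-1 : ℝ) * r0
        · ring
        · ring
        · ring
      rw [hJx, hLx]
    have hxx : ⟪x, x⟫ = (1 + a)^2 + b^2 + c^2 := by
      rw [hx_def]
      simp only [inner_add_left, inner_add_right, real_inner_smul_left,
        real_inner_smul_right, he11, he22, he33, he12, he13, he23, he21, he31, he32]
      ring
    have hxne : x ≠ 0 := by
      intro h0
      have hne : (1 + a) ≠ 0 := fun h => ha1 (by linarith only [h])
      have h1 : (1 + a)^2 ≠ 0 := pow_ne_zero 2 hne
      have h2 : 0 < (1 + a)^2 := (sq_nonneg (1 + a)).lt_of_ne (Ne.symm h1)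
      rw [h0, inner_zero_left] at hxx
      linarith only [hxx, h2, sq_nonneg b, sq_nonneg c]
    refine ⟨‖x‖⁻¹ • x, norm_smul_inv_norm hxne, ?_⟩
    rw [map_smul, map_smul, hJL]



set_option maxHeartbeats 2000000 in
/-- If `J` is a self-dual and `L` an anti-self-dual orthogonal complex structure on an
oriented 4-dimensional real inner product space, with forms `α(x,y) = ⟪Jx,y⟫` and
`β(x,y) = ⟪Lx,y⟫`, then `½(α+β)` is a calibrating form (its comass is 1), and it
calibrates a unique two-plane. -/
theorem half_sum_calibrates_unique_plane
    {V : Type*} [NormedAddCommGroup V] [InnerProductSpace ℝ V]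
    (hdim : Module.finrank ℝ V = 4)
    (o : Orientation ℝ V (Fin 4))
    (J L : V →ₗ[ℝ] V)
    (hJ2 : ∀ x : V, J (J x) = -x) (hJo : ∀ x y : V, ⟪J x, J y⟫ = ⟪x, y⟫)
    (hL2 : ∀ x : V, L (L x) = -x) (hLo : ∀ x y : V, ⟪L x, L y⟫ = ⟪x, y⟫)
    (hJsd : ∀ e : OrthonormalBasis (Fin 4) ℝ V, e.toBasis.orientation = o →
      ⟪J (e 0), e 1⟫ * ⟪J (e 2), e 3⟫ - ⟪J (e 0), e 2⟫ * ⟪J (e 1), e 3⟫ +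
        ⟪J (e 0), e 3⟫ * ⟪J (e 1), e 2⟫ = 1)
    (hLasd : ∀ e : OrthonormalBasis (Fin 4) ℝ V, e.toBasis.orientation = o →
      ⟪L (e 0), e 1⟫ * ⟪L (e 2), e 3⟫ - ⟪L (e 0), e 2⟫ * ⟪L (e 1), e 3⟫ +
        ⟪L (e 0), e 3⟫ * ⟪L (e 1), e 2⟫ = -1) :
    IsLUB {r : ℝ | ∃ u v : V, ‖u‖ = 1 ∧ ‖v‖ = 1 ∧ ⟪u, v⟫ = 0 ∧
        r = (⟪J u, v⟫ + ⟪L u, v⟫) / 2} 1 ∧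
    ∃! P : Submodule ℝ V, Module.finrank ℝ P = 2 ∧
      ∃ u v : V, ‖u‖ = 1 ∧ ‖v‖ = 1 ∧ ⟪u, v⟫ = 0 ∧ u ∈ P ∧ v ∈ P ∧
        (⟪J u, v⟫ + ⟪L u, v⟫) / 2 = 1 := by
  classical
  haveI : FiniteDimensional ℝ V := .of_finrank_pos (by omega)
  have hJsk : ∀ x y : V, ⟪J x, y⟫ = -⟪x, J y⟫ := by
    intro x y
    have h1 : ⟪J x, J (J y)⟫ = ⟪x, J y⟫ := hJo x (J y)
    rw [hJ2 y, inner_neg_right] at h1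
    linarith
  have hJself : ∀ x : V, ⟪x, J x⟫ = 0 := by
    intro x
    have h := hJsk x x
    have hc : ⟪J x, x⟫ = ⟪x, J x⟫ := real_inner_comm _ _
    linarith
  have hnJ : ∀ x : V, ‖J x‖ = ‖x‖ := by
    intro x
    rw [norm_eq_sqrt_real_inner (J x), norm_eq_sqrt_real_inner x, hJo]
  have hnL : ∀ x : V, ‖L x‖ = ‖x‖ := by
    intro x
    rw [norm_eq_sqrt_real_inner (L x), norm_eq_sqrt_real_inner x, hLo]
  -- the fixed unit vector
  obtain ⟨e, ho, he1, he3⟩ := exists_adapted hdim o J hJ2 hJo hJsd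
  obtain ⟨u, hu, hJLu⟩ := exists_unit_fixed o J L hJ2 hL2 hLo e ho he1 he3 hLasd
  have huu : ⟪u, u⟫ = 1 := by
    rw [real_inner_self_eq_norm_mul_norm, hu]; norm_num
  have hJuJu : ⟪J u, J u⟫ = 1 := by rw [hJo, huu]
  have huJu : ⟪u, J u⟫ = 0 := hJself u
  have hJuu : ⟪J u, u⟫ = 0 := by rw [real_inner_comm, huJu]
  have hJunorm : ‖J u‖ = 1 := by rw [hnJ, hu]
  have hval : (⟪J u, J u⟫ + ⟪L u, J u⟫) / 2 = 1 := by
    rw [← hJLu, hJuJu]; norm_num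
  -- the bound
  have hub : ∀ u' v' : V, ‖u'‖ = 1 → ‖v'‖ = 1 →
      ⟪J u', v'⟫ ≤ 1 ∧ ⟪L u', v'⟫ ≤ 1 := by
    intro u' v' hu' hv'
    constructor
    · have h := real_inner_le_norm (J u') v'
      rw [hnJ, hu', hv'] at h
      linarith
    · have h := real_inner_le_norm (L u') v'
      rw [hnL, hu', hv'] at h
      linarith
  constructor
  · -- IsLUB part
    constructor
    · rintro r ⟨u', v', hu', hv', -, rfl⟩
      obtain ⟨h1, h2⟩ := hub u' v' hu' hv'
      linarith
    · intro bnd hbnd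
      exact hbnd ⟨u, J u, hu, hJunorm, huJu, hval.symm⟩
  · -- unique plane part
    set E : Submodule ℝ V := LinearMap.ker (J - L) with hE_def
    have hmemE : ∀ z : V, z ∈ E ↔ J z = L z := by
      intro z
      rw [hE_def, LinearMap.mem_ker, LinearMap.sub_apply, sub_eq_zero]
    have huE : u ∈ E := (hmemE u).mpr hJLu
    have hJuE : J u ∈ E := by
      rw [hmemE]
      rw [hJ2 u, hJLu, hL2 u]
    have hpair : Orthonormal ℝ ![u, J u] := by
      rw [orthonormal_iff_ite]
      intro i j
      fin_cases i <;> fin_cases j <;> simp [huu, hJuJu, huJu, hJuu, -inner_self_eq_norm_sq_to_K, -real_inner_self_eq_norm_sq]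
    set P : Submodule ℝ V := Submodule.span ℝ (Set.range ![u, J u]) with hP_def
    have hPrank : Module.finrank ℝ P = 2 := by
      simpa using finrank_span_eq_card hpair.linearIndependent
    have hPE : P ≤ E := by
      rw [hP_def, Submodule.span_le, Set.range_subset_iff]
      intro i
      fin_cases i
      exacts [huE, hJuE]
    have hE2 : Module.finrank ℝ E = 2 := by
      refine le_antisymm ?_ ?_
      · by_contra hcon
        push_neg at hcon
        have hPop : Module.finrank ℝ (Pᗮ) = 2 := by
          have := Submodule.finrank_add_finrank_orthogonal (K := P)
          omega
        have hle : Module.finrank ℝ ((E ⊔ Pᗮ : Submodule ℝ V) : Submodule ℝ V) ≤ 4 := by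
          have := Submodule.finrank_le (E ⊔ Pᗮ : Submodule ℝ V)
          omega
        have hinf : Module.finrank ℝ ((E ⊓ Pᗮ : Submodule ℝ V) : Submodule ℝ V) ≠ 0 := by
          have := Submodule.finrank_sup_add_finrank_inf_eq E Pᗮ
          omega
        obtain ⟨w0, hw0mem, hw0ne⟩ :=
          Submodule.exists_mem_ne_zero_of_ne_bot (p := (E ⊓ Pᗮ : Submodule ℝ V)) (by
            intro hbot
            rw [hbot] at hinf
            simp at hinf)
        set w : V := ‖w0‖⁻¹ • w0 with hw_def
        have hwnorm : ‖w‖ = 1 := norm_smul_inv_norm hw0ne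
        have hwE : w ∈ E := Submodule.smul_mem _ _ (Submodule.mem_inf.mp hw0mem).1
        have hwP : w ∈ Pᗮ := Submodule.smul_mem _ _ (Submodule.mem_inf.mp hw0mem).2
        have huw : ⟪u, w⟫ = 0 :=
          (Submodule.mem_orthogonal P w).mp hwP u
            (Submodule.subset_span ⟨0, rfl⟩)
        have hJuw : ⟪J u, w⟫ = 0 :=
          (Submodule.mem_orthogonal P w).mp hwP (J u)
            (Submodule.subset_span ⟨1, rfl⟩)
        have hquad : Orthonormal ℝ ![u, J u, w, J w] :=
          orthonormal_quad J hJ2 hJo u w hu hwnorm huw hJuw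
        have hJwE : J w ∈ E := by
          rw [hmemE]
          have hwE' : J w = L w := (hmemE w).mp hwE
          rw [hJ2 w, hwE', hL2 w]
        have hspan4 : Submodule.span ℝ (Set.range ![u, J u, w, J w]) ≤ E := by
          rw [Submodule.span_le, Set.range_subset_iff]
          intro i
          fin_cases i
          exacts [huE, hJuE, hwE, hJwE]
        have h4 : Module.finrank ℝ (Submodule.span ℝ (Set.range ![u, J u, w, J w])) = 4 := by
          simpa using finrank_span_eq_card hquad.linearIndependent
        have h4le : 4 ≤ Module.finrank ℝ E := h4 ▸ Submodule.finrank_mono hspan4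
        have hEfull : Module.finrank ℝ E = Module.finrank ℝ V := by
          have := Submodule.finrank_le E
          omega
        have hEtop : E = ⊤ := Submodule.eq_top_of_finrank_eq hEfull
        have hJL : ∀ z : V, J z = L z := by
          intro z
          refine (hmemE z).mp ?_
          rw [hEtop]
          exact Submodule.mem_top
        have hS := hJsd e ho
        have hA := hLasd e ho
        rw [← hJL (e 0), ← hJL (e 1), ← hJL (e 2)] at hA
        linarith
      · exact le_trans (le_of_eq hPrank.symm) (Submodule.finrank_mono hPE)
    refine ⟨E, ⟨hE2, u, J u, hu, hJunorm, huJu, huE, hJuE, hval⟩, ?_⟩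
    rintro Q ⟨hQ2, u', v', hu', hv', hu'v', hu'Q, hv'Q, hvalQ⟩
    obtain ⟨h1, h2⟩ := hub u' v' hu' hv'
    have hJ1 : ⟪J u', v'⟫ = 1 := by linarith
    have hL1 : ⟪L u', v'⟫ = 1 := by linarith
    have hJv : J u' = v' :=
      (inner_eq_one_iff_of_norm_eq_one (𝕜 := ℝ) (by rw [hnJ, hu']) hv').mp hJ1
    have hLv : L u' = v' :=
      (inner_eq_one_iff_of_norm_eq_one (𝕜 := ℝ) (by rw [hnL, hu']) hv').mp hL1
    have hu'E : u' ∈ E := (hmemE u').mpr (hJv.trans hLv.symm)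
    have hv'E : v' ∈ E := by
      rw [hmemE]
      have hJv' : J v' = -u' := by rw [← hJv, hJ2]
      have hLv' : L v' = -u' := by rw [← hLv, hL2]
      rw [hJv', hLv']
    have huu' : ⟪u', u'⟫ = 1 := by
      rw [real_inner_self_eq_norm_mul_norm, hu']; norm_num
    have hvv' : ⟪v', v'⟫ = 1 := by
      rw [real_inner_self_eq_norm_mul_norm, hv']; norm_num
    have hv'u' : ⟪v', u'⟫ = 0 := by rw [real_inner_comm, hu'v']
    have hpair' : Orthonormal ℝ ![u', v'] := by
      rw [orthonormal_iff_ite]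
      intro i j
      fin_cases i <;> fin_cases j <;> simp [huu', hvv', hu'v', hv'u', -inner_self_eq_norm_sq_to_K, -real_inner_self_eq_norm_sq]
    set S : Submodule ℝ V := Submodule.span ℝ (Set.range ![u', v']) with hS_def
    have hSrank : Module.finrank ℝ S = 2 := by
      simpa using finrank_span_eq_card hpair'.linearIndependent
    have hSQ : S ≤ Q := by
      rw [hS_def, Submodule.span_le, Set.range_subset_iff]
      intro i
      fin_cases i
      exacts [hu'Q, hv'Q]
    have hSE : S ≤ E := by
      rw [hS_def, Submodule.span_le, Set.range_subset_iff]
      intro i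
      fin_cases i
      exacts [hu'E, hv'E]
    have hSeqQ : S = Q :=
      Submodule.eq_of_le_of_finrank_le hSQ (le_of_eq (hQ2.trans hSrank.symm))
    have hQE : Q ≤ E := hSeqQ ▸ hSE
    exact Submodule.eq_of_le_of_finrank_le hQE (le_of_eq (hE2.trans hQ2.symm))
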